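/- Let N : C([−r₀,0];ℝᵈ) → ℝᵈ satisfy: N(0) = 0, N is monotone (ξ ≤ η implies N(ξ) ≤ N(η)), and there is κ ∈ (0,1) with |N(ξ) − N(η)| ≤ κ max_{1≤i≤d} ‖ξⁱ − ηⁱ‖_∞ for all ξ, η. Let Y, Ȳ : [−r₀, ∞) → ℝᵈ be continuous with segment processes Y_t, Ȳ_t (Y_t(s) = Y(t+s), s ∈ [−r₀,0]), and set Yᴺ(t) = Y(t) − N(Y_t), Ȳᴺ(t) = Ȳ(t) − N(Ȳ_t). Suppose Y_0 ≤ Ȳ_0 and Yᴺ(0) ≤ Ȳᴺ(0). Define τⁱ = inf{t > 0 : Yⁱ(t) > Ȳⁱ(t)}, τ_Nⁱ = inf{t > 0 : Y^{i,N}(t) > Ȳ^{i,N}(t)}, τ = min_i τⁱ, τ_N = min_i τ_Nⁱ. Then τ_N ≤ τ. -/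
import Mathlib


open Set

/-- The segment at time `t` of a path `Y : ℝ → ℝᵈ`, viewed as a function on `[-r₀, 0]`. -/
def seg {d : ℕ} (r₀ : ℝ) (Y : ℝ → Fin d → ℝ) (t : ℝ) :
    (Set.Icc (-r₀) (0:ℝ)) → (Fin d → ℝ) :=
  fun s => Y (t + s)

lemma coord_le_sqrt_sum {d : ℕ} (v : Fin d → ℝ) (i : Fin d) :
    v i ≤ Real.sqrt (∑ j, v j ^ 2) := by
  calc v i ≤ |v i| := le_abs_self _
    _ = Real.sqrt (v i ^ 2) := (Real.sqrt_sq_eq_abs _).symm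
    _ ≤ _ := Real.sqrt_le_sqrt
        (Finset.single_le_sum (fun j _ => sq_nonneg (v j)) (Finset.mem_univ i))

lemma key_lemma {d : ℕ} (r₀ : ℝ) (hr : 0 ≤ r₀) (κ : ℝ) (hκ : κ ∈ Set.Ioo (0:ℝ) 1)
    (N : ((Set.Icc (-r₀) (0:ℝ)) → (Fin d → ℝ)) → (Fin d → ℝ))
    (hNmono : ∀ ξ η, (∀ s i, ξ s i ≤ η s i) → ∀ i, N ξ i ≤ N η i)
    (hNlip : ∀ ξ η (B : ℝ), (∀ s i, |ξ s i - η s i| ≤ B) →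
      Real.sqrt (∑ i, (N ξ i - N η i) ^ 2) ≤ κ * B)
    (Y Ybar : ℝ → Fin d → ℝ) (hY : Continuous Y) (hYbar : Continuous Ybar)
    (hinit : ∀ s ∈ Set.Icc (-r₀) (0:ℝ), ∀ i, Y s i ≤ Ybar s i)
    (hinitN : ∀ i, Y 0 i - N (seg r₀ Y 0) i ≤ Ybar 0 i - N (seg r₀ Ybar 0) i)
    (hd : 0 < d) (r : ℝ) (hrpos : 0 < r)
    (hcross : ∀ u, 0 < u → u ≤ r → ∀ j,
      Y u j - N (seg r₀ Y u) j ≤ Ybar u j - N (seg r₀ Ybar u) j) :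
    ∀ i, Y r i ≤ Ybar r i := by
  haveI : Nonempty (Fin d) := ⟨⟨0, hd⟩⟩
  set h : ℝ → ℝ := fun u =>
    Finset.univ.sup' Finset.univ_nonempty (fun i => Y u i - Ybar u i) with hh_def
  have hcont : Continuous h := by
    apply Continuous.finset_sup'_apply
    intro i _
    exact ((continuous_apply i).comp hY).sub ((continuous_apply i).comp hYbar)
  obtain ⟨u₀, hu₀mem, hu₀max⟩ :=
    isCompact_Icc.exists_isMaxOn ⟨0, by constructor <;> [rfl; exact le_of_lt hrpos]⟩
      hcont.continuousOn
  have hle : ∀ u ∈ Icc (0:ℝ) r, h u ≤ h u₀ := fun u hu => hu₀max hu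
  suffices hB : h u₀ ≤ 0 by
    intro i
    have h1 : Y r i - Ybar r i ≤ h r :=
      Finset.le_sup' (fun i => Y r i - Ybar r i) (Finset.mem_univ i)
    have h2 := hle r ⟨le_of_lt hrpos, le_refl r⟩
    linarith
  by_contra hBpos
  push_neg at hBpos
  set B : ℝ := h u₀ with hB_def
  obtain ⟨i₀, _, hi₀⟩ := Finset.exists_mem_eq_sup' (Finset.univ_nonempty (α := Fin d))
      (fun i => Y u₀ i - Ybar u₀ i)
  -- Global bound: Y u i - Ybar u i ≤ B for u ∈ [-r₀, r]
  have hbound : ∀ u ∈ Icc (-r₀) r, ∀ i, Y u i - Ybar u i ≤ B := by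
    intro u hu i
    rcases le_or_gt u 0 with hu0 | hu0
    · have := hinit u ⟨hu.1, hu0⟩ i
      linarith
    · have h1 : Y u i - Ybar u i ≤ h u :=
        Finset.le_sup' (fun i => Y u i - Ybar u i) (Finset.mem_univ i)
      have h2 := hle u ⟨le_of_lt hu0, hu.2⟩
      linarith
  -- the crossing bound at u₀
  have hcross0 : Y u₀ i₀ - N (seg r₀ Y u₀) i₀ ≤ Ybar u₀ i₀ - N (seg r₀ Ybar u₀) i₀ := by
    rcases eq_or_lt_of_le hu₀mem.1 with heq | hlt
    · rw [← heq]; exact hinitN i₀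
    · exact hcross u₀ hlt hu₀mem.2 i₀
  -- monotonicity step
  have hmono : N (seg r₀ Y u₀) i₀ ≤ N (fun s i => Ybar (u₀ + s) i + B) i₀ := by
    apply hNmono
    intro s i
    have hs := s.2
    simp only [Set.mem_Icc] at hs
    have hmem : u₀ + (s : ℝ) ∈ Icc (-r₀) r := by
      constructor
      · have := hu₀mem.1; linarith [hs.1]
      · have := hu₀mem.2; linarith [hs.2]
    have := hbound _ hmem i
    simp only [seg]
    linarith
  -- Lipschitz step
  have hlip : N (fun s i => Ybar (u₀ + s) i + B) i₀ - N (seg r₀ Ybar u₀) i₀ ≤ κ * B := by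
    have h1 := hNlip (fun s i => Ybar (u₀ + s) i + B) (seg r₀ Ybar u₀) B
      (by
        intro s i
        simp only [seg]
        rw [show Ybar (u₀ + s) i + B - Ybar (u₀ + s) i = B by ring, abs_of_pos hBpos])
    calc N (fun s i => Ybar (u₀ + s) i + B) i₀ - N (seg r₀ Ybar u₀) i₀
        ≤ Real.sqrt (∑ j, (N (fun s i => Ybar (u₀ + s) i + B) j - N (seg r₀ Ybar u₀) j) ^ 2) :=
          coord_le_sqrt_sum (fun j => N (fun s i => Ybar (u₀ + s) i + B) j - N (seg r₀ Ybar u₀) j) i₀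
      _ ≤ κ * B := h1
  have hfinal : B ≤ κ * B := by
    have : Y u₀ i₀ - Ybar u₀ i₀ =
        (Y u₀ i₀ - N (seg r₀ Y u₀) i₀ - (Ybar u₀ i₀ - N (seg r₀ Ybar u₀) i₀))
        + (N (seg r₀ Y u₀) i₀ - N (seg r₀ Ybar u₀) i₀) := by ring
    have hBeq : B = Y u₀ i₀ - Ybar u₀ i₀ := hi₀
    linarith
  nlinarith [hκ.1, hκ.2]

/-- Proposition 3 (cf. [HY, Prop. 4.3]): the first crossing time of the
`N`-transformed processes is no later than the first crossing time of the
processes themselves. Infima are taken in `EReal`, so `inf ∅ = ⊤`. -/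
theorem tauN_le_tau (d : ℕ) (r₀ : ℝ) (hr : 0 ≤ r₀) (κ : ℝ) (hκ : κ ∈ Set.Ioo (0:ℝ) 1)
    (N : ((Set.Icc (-r₀) (0:ℝ)) → (Fin d → ℝ)) → (Fin d → ℝ))
    (hN0 : N (fun _ _ => 0) = 0)
    (hNmono : ∀ ξ η, (∀ s i, ξ s i ≤ η s i) → ∀ i, N ξ i ≤ N η i)
    (hNlip : ∀ ξ η (B : ℝ), (∀ s i, |ξ s i - η s i| ≤ B) →
      Real.sqrt (∑ i, (N ξ i - N η i) ^ 2) ≤ κ * B)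
    (Y Ybar : ℝ → Fin d → ℝ) (hY : Continuous Y) (hYbar : Continuous Ybar)
    (hinit : ∀ s ∈ Set.Icc (-r₀) (0:ℝ), ∀ i, Y s i ≤ Ybar s i)
    (hinitN : ∀ i, Y 0 i - N (seg r₀ Y 0) i ≤ Ybar 0 i - N (seg r₀ Ybar 0) i) :
    (⨅ i : Fin d, sInf {t : EReal | ∃ r : ℝ, t = (r : EReal) ∧ 0 < r ∧
        Y r i - N (seg r₀ Y r) i > Ybar r i - N (seg r₀ Ybar r) i})
      ≤ ⨅ i : Fin d, sInf {t : EReal | ∃ r : ℝ, t = (r : EReal) ∧ 0 < r ∧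
        Y r i > Ybar r i} := by
  rcases Nat.eq_zero_or_pos d with hd | hd
  · subst hd
    simp
  · by_contra hlt
    push_neg at hlt
    obtain ⟨i, hi⟩ := iInf_lt_iff.mp hlt
    obtain ⟨t, ht, htlt⟩ := sInf_lt_iff.mp hi
    obtain ⟨r, rfl, hrpos, hcrossed⟩ := ht
    have hcross : ∀ u, 0 < u → u ≤ r → ∀ j,
        Y u j - N (seg r₀ Y u) j ≤ Ybar u j - N (seg r₀ Ybar u) j := by
      intro u hu hur j
      by_contra hgt
      push_neg at hgt
      have hmem : (u : EReal) ∈ {t : EReal | ∃ r : ℝ, t = (r : EReal) ∧ 0 < r ∧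
          Y r j - N (seg r₀ Y r) j > Ybar r j - N (seg r₀ Ybar r) j} := ⟨u, rfl, hu, hgt⟩
      have : (r : EReal) < (u : EReal) :=
        lt_of_lt_of_le htlt (le_trans (iInf_le _ j) (sInf_le hmem))
      exact absurd hur (not_le.2 (EReal.coe_lt_coe_iff.mp this))
    have := key_lemma r₀ hr κ hκ N hNmono hNlip Y Ybar hY hYbar hinit hinitN hd r hrpos hcross i
    exact absurd hcrossed (not_lt.2 this)
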